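/- Suppose the map x ↦ ∇f_x(x) is continuous on X. If x* ∈ X solves VI(X,F), then the gap function ρ tends to 0 at x*: for every sequence (or net) of points x ∈ X with x → x*, ρ(x) → 0. -/
import Mathlib

open scoped RealInnerProductSpace

/-- Gradient inequality for convex functions: `g y ≥ g x + ⟪G, y - x⟫`. -/
lemma grad_ineq_aux
    {E : Type*} [NormedAddCommGroup E] [InnerProductSpace ℝ E] [CompleteSpace E]
    {X : Set E} (hXcv : Convex ℝ X) {g : E → ℝ} {G : E} {x y : E}
    (hx : x ∈ X) (hy : y ∈ X) (hconv : ConvexOn ℝ X g)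
    (hg : HasGradientAt g G x) :
    g x + ⟪G, y - x⟫ ≤ g y := by
  rcases eq_or_ne y x with rfl | hne
  · simp
  -- restrict to the segment
  set c : ℝ → E := fun t => x + t • (y - x) with hc
  have hcurve : ∀ t ∈ Set.Icc (0:ℝ) 1, c t ∈ X := by
    intro t ht
    have := hXcv hx hy (by linarith [ht.1, ht.2] : (0:ℝ) ≤ 1 - t) ht.1 (by linarith [ht.2])
    convert this using 1
    simp only [hc]
    module
  have hcderiv : HasDerivAt c (y - x) 0 := by
    have h1 : HasDerivAt (fun t : ℝ => t • (y - x)) (y - x) 0 := by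
      simpa using (hasDerivAt_id (0:ℝ)).smul_const (y - x)
    simpa [hc] using h1.const_add x
  have hgc : HasDerivAt (g ∘ c) ⟪G, y - x⟫ 0 := by
    have hF : HasFDerivAt g ((InnerProductSpace.toDual ℝ E) G) x := hg.hasFDerivAt
    have hF' : HasFDerivAt g ((InnerProductSpace.toDual ℝ E) G) (c 0) := by
      simpa [hc] using hF
    have := hF'.comp_hasDerivAt 0 hcderiv
    simpa using this
  -- convexity of g ∘ c on Icc 0 1
  have haff : ConvexOn ℝ (Set.Icc (0:ℝ) 1) (g ∘ c) := by
    have A : ConvexOn ℝ ((AffineMap.lineMap x y : ℝ →ᵃ[ℝ] E) ⁻¹' X)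
        (g ∘ (AffineMap.lineMap x y : ℝ →ᵃ[ℝ] E)) :=
      hconv.comp_affineMap _
    have hsub : Set.Icc (0:ℝ) 1 ⊆ (AffineMap.lineMap x y : ℝ →ᵃ[ℝ] E) ⁻¹' X := by
      intro t ht
      have := hcurve t ht
      simpa [AffineMap.lineMap_apply, hc, add_comm] using this
    have B := A.subset hsub (convex_Icc 0 1)
    have : (g ∘ (AffineMap.lineMap x y : ℝ →ᵃ[ℝ] E)) = g ∘ c := by
      funext t; simp [AffineMap.lineMap_apply, hc, add_comm]
    rwa [this] at B
  have hslope := haff.le_slope_of_hasDerivAt (Set.mem_Icc.2 ⟨le_refl 0, zero_le_one⟩)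
    (Set.mem_Icc.2 ⟨zero_le_one, le_refl 1⟩) one_pos hgc
  have : slope (g ∘ c) 0 1 = g y - g x := by
    simp [slope_def_field, hc, Function.comp]
  rw [this] at hslope
  linarith

/-- If `x ↦ ∇f_x(x)` is continuous on `X` and `x*` solves VI(X,F),
then the gap function `ρ(x) = f_x(x) - min_{x'∈X} f_x(x')` tends to `0` as `x → x*`
within `X`. -/
theorem stmt_1
    {E : Type*} [NormedAddCommGroup E] [InnerProductSpace ℝ E] [FiniteDimensional ℝ E]
    (X : Set E) (hXne : X.Nonempty) (hXcp : IsCompact X) (hXcv : Convex ℝ X)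
    (f : E → E → ℝ) (Df : E → E → E)
    (hconv : ∀ x ∈ X, ConvexOn ℝ X (f x))
    (hgrad : ∀ x ∈ X, ∀ y ∈ X, HasGradientAt (f x) (Df x y) y)
    (hcont : ContinuousOn (fun x => Df x x) X)
    (xs : E) (hxs : xs ∈ X)
    (hVI : ∀ x ∈ X, 0 ≤ ⟪Df xs xs, x - xs⟫) :
    Filter.Tendsto (fun x => f x x - sInf (f x '' X)) (nhdsWithin xs X) (nhds 0) := by
  set D := Metric.diam X with hD
  set h : E → ℝ := fun x => ⟪Df xs xs, x - xs⟫ + ‖Df x x - Df xs xs‖ * D with hh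
  -- continuity and evaluation of h
  have hcont_h : Filter.Tendsto h (nhdsWithin xs X) (nhds 0) := by
    have h1 : ContinuousWithinAt h X xs := by
      apply ContinuousWithinAt.add
      · exact ((continuous_const.inner (continuous_id.sub continuous_const))).continuousWithinAt
      · exact (((hcont xs hxs).sub continuousWithinAt_const).norm).mul continuousWithinAt_const
    have h0 : h xs = 0 := by simp [hh]
    simpa [h0] using h1.tendsto
  -- f x is continuous on X for each x ∈ X
  have hfcont : ∀ x ∈ X, ContinuousOn (f x) X := by
    intro x hx y hy
    exact ((hgrad x hx y hy).hasFDerivAt.continuousAt).continuousWithinAt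
  have hbdd : ∀ x ∈ X, BddBelow (f x '' X) := fun x hx =>
    (hXcp.image_of_continuousOn (hfcont x hx)).bddBelow
  -- squeeze
  apply tendsto_of_tendsto_of_tendsto_of_le_of_le' tendsto_const_nhds hcont_h
  · -- 0 ≤ ρ(x) eventually
    filter_upwards [self_mem_nhdsWithin] with x hx
    have : sInf (f x '' X) ≤ f x x := csInf_le (hbdd x hx) ⟨x, hx, rfl⟩
    linarith
  · -- ρ(x) ≤ h x eventually
    filter_upwards [self_mem_nhdsWithin] with x hx
    have key : ∀ x' ∈ X, f x x - h x ≤ f x x' := by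
      intro x' hx'
      have hgi := grad_ineq_aux hXcv hx hx' (hconv x hx) (hgrad x hx x hx)
      -- f x x + ⟪Df x x, x' - x⟫ ≤ f x x'
      have hb : ⟪Df x x, x - x'⟫ ≤ h x := by
        have e1 : ⟪Df x x, x - x'⟫ =
            ⟪Df xs xs, x - xs⟫ + ⟪Df xs xs, xs - x'⟫ + ⟪Df x x - Df xs xs, x - x'⟫ := by
          rw [inner_sub_left]
          rw [← inner_add_right]
          have : x - xs + (xs - x') = x - x' := by abel
          rw [this]
          ring
        have e2 : ⟪Df xs xs, xs - x'⟫ ≤ 0 := by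
          have hvi : (0:ℝ) ≤ ⟪Df xs xs, x' - xs⟫ := hVI x' hx'
          have hneg : ⟪Df xs xs, xs - x'⟫ = -⟪Df xs xs, x' - xs⟫ := by
            rw [← inner_neg_right]; congr 1; abel
          linarith [hneg ▸ neg_nonpos_of_nonneg hvi]
        have e3 : ⟪Df x x - Df xs xs, x - x'⟫ ≤ ‖Df x x - Df xs xs‖ * D := by
          calc ⟪Df x x - Df xs xs, x - x'⟫ ≤ ‖Df x x - Df xs xs‖ * ‖x - x'‖ :=
                real_inner_le_norm _ _
            _ ≤ ‖Df x x - Df xs xs‖ * D := by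
                apply mul_le_mul_of_nonneg_left _ (norm_nonneg _)
                rw [← dist_eq_norm]
                exact Metric.dist_le_diam_of_mem hXcp.isBounded hx hx'
        rw [e1, hh]
        simp only
        linarith
      have hinner : ⟪Df x x, x' - x⟫ = -⟪Df x x, x - x'⟫ := by
        rw [← inner_neg_right]; congr 1; abel
      linarith [hgi, hb, hinner ▸ le_refl (⟪Df x x, x' - x⟫ : ℝ)]
    have : f x x - h x ≤ sInf (f x '' X) := by
      apply le_csInf (hXne.image _)
      rintro b ⟨x', hx', rfl⟩
      exact key x' hx'
    linarith
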